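/- arXiv:1406.1643 — 4 statements merged into one kernel-verified Lean document; each statement's English description precedes it below -/
import Mathlib

section
/- Let w : [0,1]² → ℝ be continuous. Then the map φ^w : X² → ℝ defined by φ^w(x¹,x²) = Σ_{u ∈ x¹} Σ_{v ∈ x²} w(u,v) is continuous with respect to the product metric d_{X²} on X² induced by the Skorohod-type metric d_X on finite point configurations. -/
open Set

/-- The counting function of a finite point configuration `x ⊆ [0,1]`:
`N_x(t) = #{u ∈ x : u ≤ t}`. -/
noncomputable def countFn (x : Finset ℝ) (t : ℝ) : ℝ :=
  ((x.filter (fun u => u ≤ t)).card : ℝ)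

/-- A strictly increasing continuous mapping of `[0,1]` onto itself. -/
def IsTimeChange (l : ℝ → ℝ) : Prop :=
  StrictMonoOn l (Set.Icc 0 1) ∧ ContinuousOn l (Set.Icc 0 1) ∧
    l '' Set.Icc 0 1 = Set.Icc 0 1

/-- The uniform Skorohod metric on (càdlàg) functions on `[0,1]`. -/
noncomputable def dD (f g : ℝ → ℝ) : ℝ :=
  sInf {ε : ℝ | 0 < ε ∧ ∃ l : ℝ → ℝ, IsTimeChange l ∧
    (∀ t ∈ Set.Icc (0:ℝ) 1, |l t - t| ≤ ε) ∧
    (∀ t ∈ Set.Icc (0:ℝ) 1, |f (l t) - g t| ≤ ε)}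

/-- The induced metric on finite point configurations. -/
noncomputable def dX (x y : Finset ℝ) : ℝ := dD (countFn x) (countFn y)

/-- The sup product metric on `X² = X × X`. -/
noncomputable def dX2 (a b : Finset ℝ × Finset ℝ) : ℝ := max (dX a.1 b.1) (dX a.2 b.2)

/-- `φ^w(x¹,x²) = Σ_{u ∈ x¹} Σ_{v ∈ x²} w(u,v)`. -/
noncomputable def phiW (w : ℝ → ℝ → ℝ) (x : Finset ℝ × Finset ℝ) : ℝ :=
  ∑ u ∈ x.1, ∑ v ∈ x.2, w u v

lemma nat_eq_of_abs_lt {a b : ℕ} (h : |(a:ℝ) - b| < 1) : (a:ℝ) = b := by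
  have : a = b := by
    rcases lt_trichotomy a b with h' | h' | h'
    · exfalso
      have : (a:ℝ) + 1 ≤ b := by exact_mod_cast Nat.succ_le_of_lt h'
      rw [abs_lt] at h; linarith
    · exact h'
    · exfalso
      have : (b:ℝ) + 1 ≤ a := by exact_mod_cast Nat.succ_le_of_lt h'
      rw [abs_lt] at h; linarith
  exact_mod_cast this

lemma tc_mapsTo {l : ℝ → ℝ} (hl : IsTimeChange l) : ∀ t ∈ Icc (0:ℝ) 1, l t ∈ Icc (0:ℝ) 1 := by
  intro t ht; rw [← hl.2.2]; exact mem_image_of_mem l ht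

lemma tc_zero {l : ℝ → ℝ} (hl : IsTimeChange l) : l 0 = 0 := by
  have h0 : l 0 ∈ Icc (0:ℝ) 1 := tc_mapsTo hl 0 (by norm_num)
  have : (0:ℝ) ∈ l '' Icc 0 1 := by rw [hl.2.2]; norm_num
  obtain ⟨t, ht, hlt⟩ := this
  have : l 0 ≤ l t := hl.1.monotoneOn (by norm_num) ht ht.1
  linarith [hlt ▸ this, h0.1]

lemma tc_one {l : ℝ → ℝ} (hl : IsTimeChange l) : l 1 = 1 := by
  have h0 : l 1 ∈ Icc (0:ℝ) 1 := tc_mapsTo hl 1 (by norm_num)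
  have : (1:ℝ) ∈ l '' Icc 0 1 := by rw [hl.2.2]; norm_num
  obtain ⟨t, ht, hlt⟩ := this
  have : l t ≤ l 1 := hl.1.monotoneOn ht (by norm_num) ht.2
  linarith [hlt ▸ this, h0.2]

/-- countFn is strictly bigger at a point of the configuration than strictly before it. -/
lemma countFn_lt {y : Finset ℝ} {t v : ℝ} (hv : v ∈ y) (htv : t < v) :
    countFn y t < countFn y v := by
  unfold countFn
  have hss : y.filter (fun u => u ≤ t) ⊂ y.filter (fun u => u ≤ v) := by
    constructor
    · intro u hu
      have hu' := Finset.mem_filter.mp hu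
      exact Finset.mem_filter.mpr ⟨hu'.1, le_trans hu'.2 htv.le⟩
    · intro hsub
      have : v ∈ y.filter (fun u => u ≤ t) := hsub (Finset.mem_filter.mpr ⟨hv, le_refl v⟩)
      have := (Finset.mem_filter.mp this).2
      linarith
  exact_mod_cast Finset.card_lt_card hss

/-- Key structural lemma: equality of counting functions via a time change `l`
forces `l` to map `y` into `x`. -/
lemma mem_of_countFn_eq {x y : Finset ℝ} {l : ℝ → ℝ} (hl : IsTimeChange l)
    (hx : ∀ u ∈ x, u ∈ Icc (0:ℝ) 1) (hy : ∀ v ∈ y, v ∈ Icc (0:ℝ) 1)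
    (heq : ∀ t ∈ Icc (0:ℝ) 1, countFn x (l t) = countFn y t) :
    ∀ v ∈ y, l v ∈ x := by
  intro v hv
  have hv01 := hy v hv
  have hlv01 : l v ∈ Icc (0:ℝ) 1 := tc_mapsTo hl v hv01
  rcases eq_or_lt_of_le hlv01.1 with h0 | h0
  · -- l v = 0
    have h1 : (1:ℝ) ≤ countFn y v := by
      unfold countFn
      have : v ∈ y.filter (fun u => u ≤ v) := Finset.mem_filter.mpr ⟨hv, le_refl v⟩
      exact_mod_cast Finset.card_pos.mpr ⟨v, this⟩
    have h2 : (1:ℝ) ≤ countFn x (l v) := by rw [heq v hv01]; exact h1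
    unfold countFn at h2
    have : (x.filter (fun u => u ≤ l v)).Nonempty := by
      rw [← Finset.card_pos]; exact_mod_cast by exact_mod_cast lt_of_lt_of_le zero_lt_one h2
    obtain ⟨u, hu⟩ := this
    have hu' := Finset.mem_filter.mp hu
    have : u = l v := le_antisymm hu'.2 (by rw [← h0]; exact (hx u hu'.1).1)
    exact this ▸ hu'.1
  · -- 0 < l v
    by_contra hnot
    -- t' = largest "obstacle" below l v
    set S : Finset ℝ := insert 0 (x.filter (fun u => u < l v)) with hS
    have hSne : S.Nonempty := ⟨0, Finset.mem_insert_self _ _⟩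
    set t' := S.max' hSne with ht'
    have ht'_mem := S.max'_mem hSne
    have ht'_lt : t' < l v := by
      rcases Finset.mem_insert.mp ht'_mem with h | h
      · rw [ht', h]; exact h0
      · exact (Finset.mem_filter.mp h).2
    have ht'_nonneg : 0 ≤ t' := S.le_max' 0 (Finset.mem_insert_self _ _)
    -- countFn x t' = countFn x (l v)
    have hfe : x.filter (fun u => u ≤ t') = x.filter (fun u => u ≤ l v) := by
      ext u
      simp only [Finset.mem_filter]
      constructor
      · rintro ⟨h1, h2⟩; exact ⟨h1, le_trans h2 ht'_lt.le⟩
      · rintro ⟨h1, h2⟩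
        refine ⟨h1, ?_⟩
        have hne : u ≠ l v := fun h => hnot (h ▸ h1)
        exact S.le_max' u (Finset.mem_insert.mpr (Or.inr
          (Finset.mem_filter.mpr ⟨h1, lt_of_le_of_ne h2 hne⟩)))
    -- IVT: ∃ t ∈ [0,v], l t = t'
    have hIVT : t' ∈ l '' Icc 0 v := by
      apply intermediate_value_Icc hv01.1
        (hl.2.1.mono (Icc_subset_Icc le_rfl hv01.2))
      rw [tc_zero hl]
      exact ⟨ht'_nonneg, ht'_lt.le⟩
    obtain ⟨t, ht0v, hlt⟩ := hIVT
    have ht01 : t ∈ Icc (0:ℝ) 1 := ⟨ht0v.1, le_trans ht0v.2 hv01.2⟩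
    have htv : t < v := by
      by_contra htv
      push_neg at htv
      have : l v ≤ l t := hl.1.monotoneOn hv01 ht01 htv
      rw [hlt] at this
      linarith
    have key : countFn x (l t) = countFn x (l v) := by
      rw [hlt]
      unfold countFn
      rw [hfe]
    have h1 := heq t ht01
    have h2 := heq v hv01
    have h3 := countFn_lt hv htv
    linarith

lemma card_eq_of_countFn_eq {x y : Finset ℝ} {l : ℝ → ℝ} (hl : IsTimeChange l)
    (hx : ∀ u ∈ x, u ∈ Icc (0:ℝ) 1) (hy : ∀ v ∈ y, v ∈ Icc (0:ℝ) 1)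
    (heq : ∀ t ∈ Icc (0:ℝ) 1, countFn x (l t) = countFn y t) :
    x.card = y.card := by
  have h1 := heq 1 (by norm_num)
  rw [tc_one hl] at h1
  have hx1 : x.filter (fun u => u ≤ (1:ℝ)) = x := Finset.filter_true_of_mem (fun u hu => (hx u hu).2)
  have hy1 : y.filter (fun u => u ≤ (1:ℝ)) = y := Finset.filter_true_of_mem (fun u hu => (hy u hu).2)
  unfold countFn at h1
  rw [hx1, hy1] at h1
  exact_mod_cast h1

lemma image_eq_of_countFn_eq {x y : Finset ℝ} {l : ℝ → ℝ} (hl : IsTimeChange l)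
    (hx : ∀ u ∈ x, u ∈ Icc (0:ℝ) 1) (hy : ∀ v ∈ y, v ∈ Icc (0:ℝ) 1)
    (heq : ∀ t ∈ Icc (0:ℝ) 1, countFn x (l t) = countFn y t) :
    y.image l = x := by
  have hinj : ∀ a ∈ y, ∀ b ∈ y, l a = l b → a = b := fun a ha b hb h =>
    hl.1.injOn (hy a ha) (hy b hb) h
  apply Finset.eq_of_subset_of_card_le
  · intro u hu
    obtain ⟨v, hv, rfl⟩ := Finset.mem_image.mp hu
    exact mem_of_countFn_eq hl hx hy heq v hv
  · rw [Finset.card_image_of_injOn hinj, card_eq_of_countFn_eq hl hx hy heq]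

lemma sum_transfer {x y : Finset ℝ} {l : ℝ → ℝ} (hl : IsTimeChange l)
    (hx : ∀ u ∈ x, u ∈ Icc (0:ℝ) 1) (hy : ∀ v ∈ y, v ∈ Icc (0:ℝ) 1)
    (heq : ∀ t ∈ Icc (0:ℝ) 1, countFn x (l t) = countFn y t) (f : ℝ → ℝ) :
    ∑ u ∈ x, f u = ∑ v ∈ y, f (l v) := by
  rw [← image_eq_of_countFn_eq hl hx hy heq]
  exact Finset.sum_image (fun a ha b hb h => hl.1.injOn (hy a ha) (hy b hb) h)

-- id is a time change
lemma id_timeChange : IsTimeChange (fun t => t) :=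
  ⟨fun a _ b _ h => h, continuousOn_id, image_id _⟩

-- the defining set of dD is nonempty
lemma dD_set_nonempty (x y : Finset ℝ) :
    {ε : ℝ | 0 < ε ∧ ∃ l : ℝ → ℝ, IsTimeChange l ∧
      (∀ t ∈ Set.Icc (0:ℝ) 1, |l t - t| ≤ ε) ∧
      (∀ t ∈ Set.Icc (0:ℝ) 1, |countFn x (l t) - countFn y t| ≤ ε)}.Nonempty := by
  refine ⟨(x.card : ℝ) + y.card + 1, ?_, (fun t => t), id_timeChange, ?_, ?_⟩
  · positivity
  · intro t _; simp; positivity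
  · intro t _
    have h1 : 0 ≤ countFn x t ∧ countFn x t ≤ x.card := by
      unfold countFn
      constructor
      · positivity
      · exact_mod_cast Finset.card_filter_le _ _
    have h2 : 0 ≤ countFn y t ∧ countFn y t ≤ y.card := by
      unfold countFn
      constructor
      · positivity
      · exact_mod_cast Finset.card_filter_le _ _
    rw [abs_le]
    constructor <;> [skip; skip] <;> simp only [] <;> nlinarith [h1.1, h1.2, h2.1, h2.2]

/-- From dX x y ≤ η < b, extract a time change with both bounds < b. -/
lemma extract_timeChange {x y : Finset ℝ} {η b : ℝ} (hη : dX x y ≤ η) (hb : η < b) :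
    ∃ a, a < b ∧ 0 < a ∧ ∃ l : ℝ → ℝ, IsTimeChange l ∧
      (∀ t ∈ Set.Icc (0:ℝ) 1, |l t - t| ≤ a) ∧
      (∀ t ∈ Set.Icc (0:ℝ) 1, |countFn x (l t) - countFn y t| ≤ a) := by
  have hne := dD_set_nonempty x y
  have hlt : dX x y < b := lt_of_le_of_lt hη hb
  unfold dX dD at hlt
  obtain ⟨a, ha, hab⟩ := exists_lt_of_csInf_lt hne hlt
  exact ⟨a, hab, ha.1, ha.2⟩

-- uniform continuity on the square
lemma unif_cont {w : ℝ → ℝ → ℝ}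
    (hw : ContinuousOn (fun p : ℝ × ℝ => w p.1 p.2) (Set.Icc 0 1 ×ˢ Set.Icc 0 1))
    {ε' : ℝ} (hε' : 0 < ε') :
    ∃ δ > 0, ∀ p ∈ Icc (0:ℝ) 1 ×ˢ Icc (0:ℝ) 1, ∀ q ∈ Icc (0:ℝ) 1 ×ˢ Icc (0:ℝ) 1,
      dist p q ≤ δ → |w p.1 p.2 - w q.1 q.2| ≤ ε' := by
  have hK : IsCompact (Icc (0:ℝ) 1 ×ˢ Icc (0:ℝ) 1) := (isCompact_Icc).prod isCompact_Icc
  have huc := hK.uniformContinuousOn_of_continuous hw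
  rw [Metric.uniformContinuousOn_iff_le] at huc
  obtain ⟨δ, hδ, h⟩ := huc ε' hε'
  refine ⟨δ, hδ, fun p hp q hq hpq => ?_⟩
  have := h p hp q hq hpq
  rwa [Real.dist_eq] at this

/-- If `w` is continuous on `[0,1]²`, then `φ^w` is continuous on `X²` for the product
metric `d_{X²}` (ε-η formulation at every point consisting of configurations in `[0,1]`). -/
theorem stmt_2 (w : ℝ → ℝ → ℝ)
    (hw : ContinuousOn (fun p : ℝ × ℝ => w p.1 p.2) (Set.Icc 0 1 ×ˢ Set.Icc 0 1))
    (x : Finset ℝ × Finset ℝ)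
    (hx1 : ∀ u ∈ x.1, u ∈ Set.Icc (0:ℝ) 1) (hx2 : ∀ v ∈ x.2, v ∈ Set.Icc (0:ℝ) 1) :
    ∀ ε > 0, ∃ η > 0, ∀ y : Finset ℝ × Finset ℝ,
      (∀ u ∈ y.1, u ∈ Set.Icc (0:ℝ) 1) → (∀ v ∈ y.2, v ∈ Set.Icc (0:ℝ) 1) →
      dX2 x y ≤ η → |phiW w y - phiW w x| ≤ ε := by
  intro ε hε
  set n₁ := x.1.card with hn₁
  set n₂ := x.2.card with hn₂
  set ε' : ℝ := ε / ((n₁ + 1) * (n₂ + 1)) with hε'def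
  have hε' : 0 < ε' := by positivity
  obtain ⟨δ, hδ, hδw⟩ := unif_cont hw hε'
  set b : ℝ := min δ (1/2) with hbdef
  have hb0 : 0 < b := lt_min hδ (by norm_num)
  refine ⟨b / 2, by positivity, fun y hy1 hy2 hdxy => ?_⟩
  have hbb : b / 2 < b := by linarith
  have hd1 : dX x.1 y.1 ≤ b / 2 := le_trans (le_max_left _ _) hdxy
  have hd2 : dX x.2 y.2 ≤ b / 2 := le_trans (le_max_right _ _) hdxy
  obtain ⟨a₁, ha₁b, ha₁0, l₁, hl₁, hl₁t, hl₁c⟩ := extract_timeChange hd1 hbb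
  obtain ⟨a₂, ha₂b, ha₂0, l₂, hl₂, hl₂t, hl₂c⟩ := extract_timeChange hd2 hbb
  have ha₁δ : a₁ ≤ δ := le_trans ha₁b.le (min_le_left _ _)
  have ha₂δ : a₂ ≤ δ := le_trans ha₂b.le (min_le_left _ _)
  have ha₁h : a₁ < 1 := lt_of_lt_of_le ha₁b (le_trans (min_le_right _ _) (by norm_num))
  have ha₂h : a₂ < 1 := lt_of_lt_of_le ha₂b (le_trans (min_le_right _ _) (by norm_num))
  have heq₁ : ∀ t ∈ Icc (0:ℝ) 1, countFn x.1 (l₁ t) = countFn y.1 t := by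
    intro t ht
    exact nat_eq_of_abs_lt (lt_of_le_of_lt (hl₁c t ht) ha₁h)
  have heq₂ : ∀ t ∈ Icc (0:ℝ) 1, countFn x.2 (l₂ t) = countFn y.2 t := by
    intro t ht
    exact nat_eq_of_abs_lt (lt_of_le_of_lt (hl₂c t ht) ha₂h)
  -- transfer the double sum
  have hsum : phiW w x = ∑ v ∈ y.1, ∑ v' ∈ y.2, w (l₁ v) (l₂ v') := by
    unfold phiW
    rw [sum_transfer hl₁ hx1 hy1 heq₁ (fun u => ∑ v ∈ x.2, w u v)]
    exact Finset.sum_congr rfl fun v _ => sum_transfer hl₂ hx2 hy2 heq₂ (w (l₁ v))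
  -- termwise bound
  have hterm : ∀ v ∈ y.1, ∀ v' ∈ y.2, |w v v' - w (l₁ v) (l₂ v')| ≤ ε' := by
    intro v hv v' hv'
    have hv01 := hy1 v hv
    have hv'01 := hy2 v' hv'
    have hp : ((v, v') : ℝ × ℝ) ∈ Icc (0:ℝ) 1 ×ˢ Icc (0:ℝ) 1 := ⟨hv01, hv'01⟩
    have hq : ((l₁ v, l₂ v') : ℝ × ℝ) ∈ Icc (0:ℝ) 1 ×ˢ Icc (0:ℝ) 1 :=
      ⟨tc_mapsTo hl₁ v hv01, tc_mapsTo hl₂ v' hv'01⟩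
    have hdist : dist ((v, v') : ℝ × ℝ) ((l₁ v, l₂ v') : ℝ × ℝ) ≤ δ := by
      rw [Prod.dist_eq]
      apply max_le
      · rw [Real.dist_eq, abs_sub_comm]; exact le_trans (hl₁t v hv01) ha₁δ
      · rw [Real.dist_eq, abs_sub_comm]; exact le_trans (hl₂t v' hv'01) ha₂δ
    exact hδw (v, v') hp (l₁ v, l₂ v') hq hdist
  -- cards
  have hc₁ : y.1.card = n₁ := (card_eq_of_countFn_eq hl₁ hx1 hy1 heq₁).symm
  have hc₂ : y.2.card = n₂ := (card_eq_of_countFn_eq hl₂ hx2 hy2 heq₂).symm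
  rw [hsum]
  have habs : |(∑ v ∈ y.1, ∑ v' ∈ y.2, w v v') - ∑ v ∈ y.1, ∑ v' ∈ y.2, w (l₁ v) (l₂ v')|
      ≤ (n₁ : ℝ) * n₂ * ε' := by
    rw [← Finset.sum_sub_distrib]
    calc |∑ v ∈ y.1, (∑ v' ∈ y.2, w v v' - ∑ v' ∈ y.2, w (l₁ v) (l₂ v'))|
        ≤ ∑ v ∈ y.1, |∑ v' ∈ y.2, w v v' - ∑ v' ∈ y.2, w (l₁ v) (l₂ v')| :=
          Finset.abs_sum_le_sum_abs _ _
      _ ≤ ∑ v ∈ y.1, ((n₂ : ℝ) * ε') := by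
          apply Finset.sum_le_sum
          intro v hv
          rw [← Finset.sum_sub_distrib]
          calc |∑ v' ∈ y.2, (w v v' - w (l₁ v) (l₂ v'))|
              ≤ ∑ v' ∈ y.2, |w v v' - w (l₁ v) (l₂ v')| := Finset.abs_sum_le_sum_abs _ _
            _ ≤ ∑ _v' ∈ y.2, ε' := Finset.sum_le_sum fun v' hv' => hterm v hv v' hv'
            _ = (n₂ : ℝ) * ε' := by rw [Finset.sum_const, hc₂, nsmul_eq_mul]
      _ = (n₁ : ℝ) * ((n₂ : ℝ) * ε') := by rw [Finset.sum_const, hc₁, nsmul_eq_mul]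
      _ = (n₁ : ℝ) * n₂ * ε' := by ring
  refine le_trans habs ?_
  have hle : ((n₁ : ℝ)) * n₂ ≤ ((n₁ : ℝ) + 1) * ((n₂ : ℝ) + 1) := by
    have h1 : (0:ℝ) ≤ n₁ := Nat.cast_nonneg _
    have h2 : (0:ℝ) ≤ n₂ := Nat.cast_nonneg _
    nlinarith
  have hεeq : ((n₁ : ℝ) + 1) * ((n₂ : ℝ) + 1) * ε' = ε := by
    rw [hε'def]
    field_simp
  calc (n₁ : ℝ) * n₂ * ε' ≤ ((n₁ : ℝ) + 1) * ((n₂ : ℝ) + 1) * ε' := by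
        exact mul_le_mul_of_nonneg_right hle hε'.le
    _ = ε := hεeq
end

section
/- Let w : [0,1]² → ℝ be continuous and define the symmetric kernel h_{φ^w} on X² × X² by h_{φ^w}(x,y) = ½(φ^w(x¹,x²) + φ^w(y¹,y²) − φ^w(x¹,y²) − φ^w(y¹,x²)), where φ^w(a,b) = Σ_{u∈a, v∈b} w(u,v). Then h_{φ^w} is continuous on (X²)² with respect to the product metric d induced by the Skorohod-type metric d_X. -/
open Set

/-- The sup product metric on `(X²)²`. -/
noncomputable def dXX (p q : (Finset ℝ × Finset ℝ) × (Finset ℝ × Finset ℝ)) : ℝ :=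
  max (dX2 p.1 q.1) (dX2 p.2 q.2)

/-- The symmetric kernel `h_{φ^w}`. -/
noncomputable def hPhiW (w : ℝ → ℝ → ℝ) (x y : Finset ℝ × Finset ℝ) : ℝ :=
  (phiW w (x.1, x.2) + phiW w (y.1, y.2) - phiW w (x.1, y.2) - phiW w (y.1, x.2)) / 2


lemma nat_abs_lt_one {p q : ℕ} (h : |(p:ℝ) - (q:ℝ)| < 1) : p = q := by
  have h' := abs_lt.mp h
  by_contra hne
  rcases Nat.lt_or_ge p q with hlt | hge
  · have : p + 1 ≤ q := hlt
    have : (p:ℝ) + 1 ≤ (q:ℝ) := by exact_mod_cast this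
    linarith [h'.1]
  · have hlt2 : q < p := lt_of_le_of_ne hge (Ne.symm hne)
    have : q + 1 ≤ p := hlt2
    have : (q:ℝ) + 1 ≤ (p:ℝ) := by exact_mod_cast this
    linarith [h'.2]

lemma id_timeChange_s3 : IsTimeChange id :=
  ⟨fun _ _ _ _ h => h, continuousOn_id, Set.image_id _⟩

lemma exists_tc (a a' : Finset ℝ) {η δ : ℝ} (hd : dX a a' ≤ η) (hηδ : η < δ) :
    ∃ ε : ℝ, 0 < ε ∧ ε < δ ∧ ∃ l : ℝ → ℝ, IsTimeChange l ∧
      (∀ t ∈ Set.Icc (0:ℝ) 1, |l t - t| ≤ ε) ∧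
      (∀ t ∈ Set.Icc (0:ℝ) 1, |countFn a (l t) - countFn a' t| ≤ ε) := by
  have hne : {ε : ℝ | 0 < ε ∧ ∃ l : ℝ → ℝ, IsTimeChange l ∧
      (∀ t ∈ Set.Icc (0:ℝ) 1, |l t - t| ≤ ε) ∧
      (∀ t ∈ Set.Icc (0:ℝ) 1, |countFn a (l t) - countFn a' t| ≤ ε)}.Nonempty := by
    refine ⟨(a.card : ℝ) + (a'.card : ℝ) + 1, ⟨by positivity, id, id_timeChange_s3, ?_, ?_⟩⟩
    · intro t _; simp only [id]; rw [sub_self, abs_zero]; positivity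
    · intro t _
      have h1 : (0:ℝ) ≤ countFn a (id t) := Nat.cast_nonneg _
      have h2 : countFn a (id t) ≤ (a.card : ℝ) :=
        Nat.cast_le.2 (Finset.card_filter_le _ _)
      have h3 : (0:ℝ) ≤ countFn a' t := Nat.cast_nonneg _
      have h4 : countFn a' t ≤ (a'.card : ℝ) :=
        Nat.cast_le.2 (Finset.card_filter_le _ _)
      rw [abs_le]; constructor <;> linarith
  have hlt : dX a a' < δ := lt_of_le_of_lt hd hηδ
  obtain ⟨ε, hmem, hεδ⟩ := exists_lt_of_csInf_lt hne hlt
  exact ⟨ε, hmem.1, hεδ, hmem.2⟩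

lemma match_lemma (a a' : Finset ℝ) (ha : ∀ u ∈ a, u ∈ Set.Icc (0:ℝ) 1)
    (ha' : ∀ u ∈ a', u ∈ Set.Icc (0:ℝ) 1) {η δ : ℝ} (hδ : δ ≤ 1/2)
    (hd : dX a a' ≤ η) (hηδ : η < δ) :
    ∃ l : ℝ → ℝ, Set.InjOn l ↑a' ∧ a'.image l = a ∧ ∀ u ∈ a', |l u - u| ≤ δ := by
  obtain ⟨ε, hε0, hεδ, l, hl, hlt, hft⟩ := exists_tc a a' hd hηδ
  have hmono : MonotoneOn l (Set.Icc 0 1) := hl.1.monotoneOn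
  have hmaps : ∀ t ∈ Set.Icc (0:ℝ) 1, l t ∈ Set.Icc (0:ℝ) 1 := by
    intro t ht
    have : l t ∈ l '' Set.Icc 0 1 := Set.mem_image_of_mem l ht
    rwa [hl.2.2] at this
  have key : ∀ t ∈ Set.Icc (0:ℝ) 1,
      (a.filter (fun u => u ≤ l t)).card = (a'.filter (fun u => u ≤ t)).card := by
    intro t ht
    apply nat_abs_lt_one
    have h1 := hft t ht
    simp only [countFn] at h1
    calc |((a.filter (fun u => u ≤ l t)).card : ℝ) - ((a'.filter (fun u => u ≤ t)).card : ℝ)|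
        ≤ ε := h1
      _ < 1 := by linarith
  -- l maps points of a' into a
  have hmem : ∀ u' ∈ a', l u' ∈ a := by
    intro u' hu'
    by_contra hc
    have hu'I : u' ∈ Set.Icc (0:ℝ) 1 := ha' u' hu'
    have hcI : l u' ∈ Set.Icc (0:ℝ) 1 := hmaps u' hu'I
    have hSeq := key u' hu'I
    have hpos : 0 < (a'.filter (fun u => u ≤ u')).card :=
      Finset.card_pos.2 ⟨u', Finset.mem_filter.2 ⟨hu', le_refl _⟩⟩
    rcases Finset.eq_empty_or_nonempty (a.filter (fun u => u ≤ l u')) with hS | hS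
    · rw [hS] at hSeq; simp at hSeq; omega
    · set m := (a.filter (fun u => u ≤ l u')).max' hS with hm
      have hmS : m ∈ a.filter (fun u => u ≤ l u') := Finset.max'_mem _ hS
      have hma : m ∈ a := (Finset.mem_filter.1 hmS).1
      have hmle : m ≤ l u' := (Finset.mem_filter.1 hmS).2
      have hmne : m ≠ l u' := fun h => hc (h ▸ hma)
      have hmlt : m < l u' := lt_of_le_of_ne hmle hmne
      have hmI : m ∈ Set.Icc (0:ℝ) 1 := ha m hma
      set mid := (m + l u') / 2 with hmid
      have hmidI : mid ∈ Set.Icc (0:ℝ) 1 := by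
        constructor
        · have := hmI.1; have := hcI.1; simp only [hmid]; linarith
        · have := hmI.2; have := hcI.2; simp only [hmid]; linarith
      have : mid ∈ l '' Set.Icc 0 1 := by rw [hl.2.2]; exact hmidI
      obtain ⟨s, hsI, hls⟩ := this
      have hmltmid : m < mid := by simp only [hmid]; linarith
      have hmidlt : mid < l u' := by simp only [hmid]; linarith
      have hsu : s < u' := by
        by_contra hsu
        push_neg at hsu
        have := hmono hu'I hsI hsu
        rw [hls] at this
        linarith
      -- jump: fewer a'-points ≤ s than ≤ u'
      have hjump : (a'.filter (fun u => u ≤ s)).card < (a'.filter (fun u => u ≤ u')).card := by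
        apply Finset.card_lt_card
        rw [Finset.ssubset_iff_of_subset]
        · exact ⟨u', Finset.mem_filter.2 ⟨hu', le_refl _⟩,
            fun h => absurd ((Finset.mem_filter.1 h).2) (not_le.2 hsu)⟩
        · intro z hz
          have hz' := Finset.mem_filter.1 hz
          exact Finset.mem_filter.2 ⟨hz'.1, le_trans hz'.2 (le_of_lt hsu)⟩
      have hjump2 : (a.filter (fun u => u ≤ l s)).card < (a.filter (fun u => u ≤ l u')).card := by
        rw [key s hsI, key u' hu'I]; exact hjump
      have hnotsub : ¬ (a.filter (fun u => u ≤ l u')) ⊆ (a.filter (fun u => u ≤ l s)) :=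
        fun h => absurd (Finset.card_le_card h) (not_le.2 hjump2)
      obtain ⟨a0, ha0big, ha0small⟩ := Finset.not_subset.1 hnotsub
      have ha0a : a0 ∈ a := (Finset.mem_filter.1 ha0big).1
      have ha0le : a0 ≤ l u' := (Finset.mem_filter.1 ha0big).2
      have ha0gt : l s < a0 := by
        by_contra h
        push_neg at h
        exact ha0small (Finset.mem_filter.2 ⟨ha0a, h⟩)
      have ha0m : a0 ≤ m := Finset.le_max' (a.filter (fun u => u ≤ l u')) a0 (Finset.mem_filter.2 ⟨ha0a, ha0le⟩)
      rw [hls] at ha0gt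
      linarith
  -- l 1 = 1
  have h1I : (1:ℝ) ∈ Set.Icc (0:ℝ) 1 := by norm_num
  have hl1 : l 1 = 1 := by
    have h1 : l 1 ∈ Set.Icc (0:ℝ) 1 := hmaps 1 h1I
    have h2 : (1:ℝ) ∈ l '' Set.Icc 0 1 := by rw [hl.2.2]; exact h1I
    obtain ⟨t, ht, hlt1⟩ := h2
    have h3 := hmono ht h1I ht.2
    rw [hlt1] at h3
    linarith [h1.2]
  have hcard : a.card = a'.card := by
    have h1 := key 1 h1I
    rw [hl1] at h1
    rw [Finset.filter_true_of_mem (fun u hu => (ha u hu).2),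
        Finset.filter_true_of_mem (fun u hu => (ha' u hu).2)] at h1
    exact h1
  have hinj : Set.InjOn l ↑a' := hl.1.injOn.mono (fun u hu => ha' u hu)
  have himg : a'.image l = a := by
    apply Finset.eq_of_subset_of_card_le
    · intro z hz
      obtain ⟨u, hu, huz⟩ := Finset.mem_image.1 hz
      exact huz ▸ hmem u hu
    · rw [Finset.card_image_of_injOn hinj, hcard]
  exact ⟨l, hinj, himg, fun u hu => le_trans (hlt u (ha' u hu)) (le_of_lt hεδ)⟩


lemma sum_diff (w : ℝ → ℝ → ℝ) (a a' b b' : Finset ℝ) (la lb : ℝ → ℝ)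
    (hia : Set.InjOn la ↑a') (himga : a'.image la = a)
    (hib : Set.InjOn lb ↑b') (himgb : b'.image lb = b)
    (ε0 : ℝ)
    (hbound : ∀ u ∈ a', ∀ v ∈ b', |w (la u) (lb v) - w u v| ≤ ε0) :
    |phiW w (a, b) - phiW w (a', b')| ≤ (a'.card : ℝ) * (b'.card : ℝ) * ε0 := by
  have hrw : phiW w (a, b) = ∑ u ∈ a', ∑ v ∈ b', w (la u) (lb v) := by
    simp only [phiW]
    rw [← himga, ← himgb]
    rw [Finset.sum_image (fun x hx y hy h => hia hx hy h)]
    apply Finset.sum_congr rfl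
    intro u _
    rw [Finset.sum_image (fun x hx y hy h => hib hx hy h)]
  rw [hrw]
  simp only [phiW]
  rw [← Finset.sum_sub_distrib]
  calc |∑ u ∈ a', (∑ v ∈ b', w (la u) (lb v) - ∑ v ∈ b', w u v)|
      ≤ ∑ u ∈ a', |∑ v ∈ b', w (la u) (lb v) - ∑ v ∈ b', w u v| :=
        Finset.abs_sum_le_sum_abs _ _
    _ ≤ ∑ u ∈ a', (b'.card : ℝ) * ε0 := by
        apply Finset.sum_le_sum
        intro u hu
        rw [← Finset.sum_sub_distrib]
        calc |∑ v ∈ b', (w (la u) (lb v) - w u v)|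
            ≤ ∑ v ∈ b', |w (la u) (lb v) - w u v| := Finset.abs_sum_le_sum_abs _ _
          _ ≤ ∑ _v ∈ b', ε0 := Finset.sum_le_sum (fun v hv => hbound u hu v hv)
          _ = (b'.card : ℝ) * ε0 := by rw [Finset.sum_const, nsmul_eq_mul]
    _ = (a'.card : ℝ) * ((b'.card : ℝ) * ε0) := by rw [Finset.sum_const, nsmul_eq_mul]
    _ = (a'.card : ℝ) * (b'.card : ℝ) * ε0 := by ring

/-- If `w` is continuous on `[0,1]²`, then `h_{φ^w}` is continuous on `(X²)²` for the
product metric `d` (ε-η formulation at every point with configurations in `[0,1]`). -/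
theorem stmt_3 (w : ℝ → ℝ → ℝ)
    (hw : ContinuousOn (fun p : ℝ × ℝ => w p.1 p.2) (Set.Icc 0 1 ×ˢ Set.Icc 0 1))
    (x y : Finset ℝ × Finset ℝ)
    (hx1 : ∀ u ∈ x.1, u ∈ Set.Icc (0:ℝ) 1) (hx2 : ∀ v ∈ x.2, v ∈ Set.Icc (0:ℝ) 1)
    (hy1 : ∀ u ∈ y.1, u ∈ Set.Icc (0:ℝ) 1) (hy2 : ∀ v ∈ y.2, v ∈ Set.Icc (0:ℝ) 1) :
    ∀ ε > 0, ∃ η > 0, ∀ x' y' : Finset ℝ × Finset ℝ,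
      (∀ u ∈ x'.1, u ∈ Set.Icc (0:ℝ) 1) → (∀ v ∈ x'.2, v ∈ Set.Icc (0:ℝ) 1) →
      (∀ u ∈ y'.1, u ∈ Set.Icc (0:ℝ) 1) → (∀ v ∈ y'.2, v ∈ Set.Icc (0:ℝ) 1) →
      dXX (x, y) (x', y') ≤ η → |hPhiW w x' y' - hPhiW w x y| ≤ ε := by
  intro ε hε
  set n : ℝ := (x.1.card : ℝ) with hn
  set m : ℝ := (x.2.card : ℝ) with hm
  set p : ℝ := (y.1.card : ℝ) with hp
  set q : ℝ := (y.2.card : ℝ) with hq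
  have hn0 : 0 ≤ n := Nat.cast_nonneg _
  have hm0 : 0 ≤ m := Nat.cast_nonneg _
  have hp0 : 0 ≤ p := Nat.cast_nonneg _
  have hq0 : 0 ≤ q := Nat.cast_nonneg _
  set S : ℝ := n * m + p * q + n * q + p * m with hSdef
  have hS0 : 0 ≤ S := by positivity
  set ε0 : ℝ := ε / (S + 1) with hε0def
  have hε0 : 0 < ε0 := div_pos hε (by linarith)
  have hcomp : IsCompact ((Set.Icc (0:ℝ) 1) ×ˢ (Set.Icc (0:ℝ) 1)) :=
    isCompact_Icc.prod isCompact_Icc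
  have huc := hcomp.uniformContinuousOn_of_continuous hw
  rw [Metric.uniformContinuousOn_iff] at huc
  obtain ⟨δ0, hδ0, hδ0p⟩ := huc ε0 hε0
  set δ : ℝ := min (δ0 / 2) (1 / 2) with hδdef
  have hδpos : 0 < δ := lt_min (by linarith) (by norm_num)
  have hδhalf : δ ≤ 1 / 2 := min_le_right _ _
  have hδδ0 : δ < δ0 := lt_of_le_of_lt (min_le_left _ _) (by linarith)
  refine ⟨δ / 2, by linarith, ?_⟩
  intro x' y' hx1' hx2' hy1' hy2' hd
  simp only [dXX, dX2, max_le_iff] at hd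
  obtain ⟨⟨hd1, hd2⟩, hd3, hd4⟩ := hd
  have hηδ : δ / 2 < δ := by linarith
  obtain ⟨l1, hi1, hg1, hb1⟩ := match_lemma x.1 x'.1 hx1 hx1' hδhalf hd1 hηδ
  obtain ⟨l2, hi2, hg2, hb2⟩ := match_lemma x.2 x'.2 hx2 hx2' hδhalf hd2 hηδ
  obtain ⟨l3, hi3, hg3, hb3⟩ := match_lemma y.1 y'.1 hy1 hy1' hδhalf hd3 hηδ
  obtain ⟨l4, hi4, hg4, hb4⟩ := match_lemma y.2 y'.2 hy2 hy2' hδhalf hd4 hηδ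
  have hc1 : (x'.1.card : ℝ) = n := by rw [hn, ← hg1, Finset.card_image_of_injOn hi1]
  have hc2 : (x'.2.card : ℝ) = m := by rw [hm, ← hg2, Finset.card_image_of_injOn hi2]
  have hc3 : (y'.1.card : ℝ) = p := by rw [hp, ← hg3, Finset.card_image_of_injOn hi3]
  have hc4 : (y'.2.card : ℝ) = q := by rw [hq, ← hg4, Finset.card_image_of_injOn hi4]
  -- bound for individual terms
  have hbnd : ∀ (sa sa' sb sb' : Finset ℝ) (la lb : ℝ → ℝ),
      sa'.image la = sa → sb'.image lb = sb →
      (∀ u ∈ sa, u ∈ Set.Icc (0:ℝ) 1) → (∀ u ∈ sa', u ∈ Set.Icc (0:ℝ) 1) →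
      (∀ u ∈ sb, u ∈ Set.Icc (0:ℝ) 1) → (∀ u ∈ sb', u ∈ Set.Icc (0:ℝ) 1) →
      (∀ u ∈ sa', |la u - u| ≤ δ) → (∀ u ∈ sb', |lb u - u| ≤ δ) →
      ∀ u ∈ sa', ∀ v ∈ sb', |w (la u) (lb v) - w u v| ≤ ε0 := by
    intro sa sa' sb sb' la lb himga himgb hA hA' hB hB' hla hlb u hu v hv
    have hlau : la u ∈ sa := himga ▸ Finset.mem_image_of_mem la hu
    have hlbv : lb v ∈ sb := himgb ▸ Finset.mem_image_of_mem lb hv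
    have hpm : ((la u, lb v) : ℝ × ℝ) ∈ (Set.Icc (0:ℝ) 1) ×ˢ (Set.Icc (0:ℝ) 1) :=
      ⟨hA _ hlau, hB _ hlbv⟩
    have hqm : ((u, v) : ℝ × ℝ) ∈ (Set.Icc (0:ℝ) 1) ×ˢ (Set.Icc (0:ℝ) 1) :=
      ⟨hA' u hu, hB' v hv⟩
    have hdist : dist ((la u, lb v) : ℝ × ℝ) ((u, v) : ℝ × ℝ) < δ0 := by
      rw [Prod.dist_eq]
      apply max_lt
      · rw [Real.dist_eq]; exact lt_of_le_of_lt (hla u hu) hδδ0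
      · rw [Real.dist_eq]; exact lt_of_le_of_lt (hlb v hv) hδδ0
    have := hδ0p _ hpm _ hqm hdist
    rw [Real.dist_eq] at this
    exact le_of_lt this
  have hΔ1 : |phiW w (x'.1, x'.2) - phiW w (x.1, x.2)| ≤ n * m * ε0 := by
    rw [abs_sub_comm]
    have := sum_diff w x.1 x'.1 x.2 x'.2 l1 l2 hi1 hg1 hi2 hg2 ε0
      (hbnd x.1 x'.1 x.2 x'.2 l1 l2 hg1 hg2 hx1 hx1' hx2 hx2' hb1 hb2)
    rwa [hc1, hc2] at this
  have hΔ2 : |phiW w (y'.1, y'.2) - phiW w (y.1, y.2)| ≤ p * q * ε0 := by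
    rw [abs_sub_comm]
    have := sum_diff w y.1 y'.1 y.2 y'.2 l3 l4 hi3 hg3 hi4 hg4 ε0
      (hbnd y.1 y'.1 y.2 y'.2 l3 l4 hg3 hg4 hy1 hy1' hy2 hy2' hb3 hb4)
    rwa [hc3, hc4] at this
  have hΔ3 : |phiW w (x'.1, y'.2) - phiW w (x.1, y.2)| ≤ n * q * ε0 := by
    rw [abs_sub_comm]
    have := sum_diff w x.1 x'.1 y.2 y'.2 l1 l4 hi1 hg1 hi4 hg4 ε0
      (hbnd x.1 x'.1 y.2 y'.2 l1 l4 hg1 hg4 hx1 hx1' hy2 hy2' hb1 hb4)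
    rwa [hc1, hc4] at this
  have hΔ4 : |phiW w (y'.1, x'.2) - phiW w (y.1, x.2)| ≤ p * m * ε0 := by
    rw [abs_sub_comm]
    have := sum_diff w y.1 y'.1 x.2 x'.2 l3 l2 hi3 hg3 hi2 hg2 ε0
      (hbnd y.1 y'.1 x.2 x'.2 l3 l2 hg3 hg2 hy1 hy1' hx2 hx2' hb3 hb2)
    rwa [hc3, hc2] at this
  have hfin : n * m * ε0 + p * q * ε0 + n * q * ε0 + p * m * ε0 ≤ ε := by
    have hS1 : (0:ℝ) < S + 1 := by linarith
    have h1 : S * ε0 ≤ ε := by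
      rw [hε0def, ← mul_div_assoc, div_le_iff₀ hS1]
      nlinarith
    calc n * m * ε0 + p * q * ε0 + n * q * ε0 + p * m * ε0 = S * ε0 := by
          rw [hSdef]; ring
      _ ≤ ε := h1
  have hexp : hPhiW w x' y' - hPhiW w x y =
      ((phiW w (x'.1, x'.2) - phiW w (x.1, x.2)) + (phiW w (y'.1, y'.2) - phiW w (y.1, y.2))
        - (phiW w (x'.1, y'.2) - phiW w (x.1, y.2))
        - (phiW w (y'.1, x'.2) - phiW w (y.1, x.2))) / 2 := by
    simp only [hPhiW]; ring
  obtain ⟨l1', r1'⟩ := abs_le.1 hΔ1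
  obtain ⟨l2', r2'⟩ := abs_le.1 hΔ2
  obtain ⟨l3', r3'⟩ := abs_le.1 hΔ3
  obtain ⟨l4', r4'⟩ := abs_le.1 hΔ4
  rw [hexp, abs_le]
  constructor <;> linarith
end

section
/- Let X₁,…,X_n be i.i.d. pairs with distribution P on X², let φ : X² → ℝ be integrable, and let Π_n be a uniformly random permutation of {1,…,n} independent of the sample. Define C_{i,j} = φ(X_i¹,X_j²) − E[φ(X_i¹,X²)|X_i¹] − E[φ(X¹,X_j²)|X_j²] + E[φ(X¹,X²)] where (X¹,X²) ~ P¹⊗P² independent of the sample, and for the kernel h_φ the permuted U-statistic U_n(X_n^{Π_n}) with X_i^{Π_n} = (X_i¹, X_{Π_n(i)}²). Then the exact decomposition √n·U_n(X_n^{Π_n}) = (n/(n−1))·( M_n^{Π_n} + R_n^{Π_n}/√n − T_n/√n ) holds, where M_n^{Π_n} = (1/√n) Σ_{i≠j} 1{Π_n(i)=j} C_{i,j}, R_n^{Π_n} = Σ_{i=1}^n (1{Π_n(i)=i} − 1/n) C_{i,i}, and T_n = (1/n) Σ_{i≠j} C_{i,j}. -/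
open MeasureTheory

lemma sum_offdiag {n : ℕ} (F : Fin n × Fin n → ℝ) :
    ∑ p ∈ Finset.univ.filter (fun p : Fin n × Fin n => p.1 ≠ p.2), F p
      = (∑ i, ∑ j, F (i, j)) - ∑ i, F (i, i) := by
  rw [Finset.sum_filter, Fintype.sum_prod_type, ← Finset.sum_sub_distrib]
  refine Finset.sum_congr rfl fun i _ => ?_
  have h : ∀ j : Fin n, (if (i, j).1 ≠ (i, j).2 then F (i, j) else 0)
      = F (i, j) - (if i = j then F (i, j) else 0) := by
    intro j; by_cases h : i = j <;> simp [h]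
  rw [Finset.sum_congr rfl fun j _ => h j, Finset.sum_sub_distrib, Finset.sum_ite_eq]
  simp

/-- The exact permutation decomposition: for any sample values, any permutation `π`, and
the centered quantities `C_{i,j} = φ(X_i¹,X_j²) − E[φ(X_i¹,X²)|X_i¹] − E[φ(X¹,X_j²)|X_j²]
+ E[φ(X¹,X²)]` (with `(X¹,X²) ~ P¹⊗P²`),
`√n·U_n(Xₙ^π) = (n/(n−1))(M_n^π + R_n^π/√n − T_n/√n)`. -/
theorem stmt_15 {E : Type*} [MeasurableSpace E]
    (P1 P2 : Measure E) (φ : E → E → ℝ)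
    (n : ℕ) (hn : 2 ≤ n) (x : Fin n → E × E) (π : Equiv.Perm (Fin n)) :
    let a : E → ℝ := fun u => ∫ v, φ u v ∂P2
    let b : E → ℝ := fun v => ∫ u, φ u v ∂P1
    let m : ℝ := ∫ u, ∫ v, φ u v ∂P2 ∂P1
    let C : Fin n → Fin n → ℝ := fun i j => φ (x i).1 (x j).2 - a (x i).1 - b (x j).2 + m
    let hφ : E × E → E × E → ℝ := fun p q =>
      (φ p.1 p.2 + φ q.1 q.2 - φ p.1 q.2 - φ q.1 p.2) / 2
    let Uperm : ℝ := (1 / ((n : ℝ) * ((n : ℝ) - 1))) *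
      ∑ p ∈ Finset.univ.filter (fun p : Fin n × Fin n => p.1 ≠ p.2),
        hφ ((x p.1).1, (x (π p.1)).2) ((x p.2).1, (x (π p.2)).2)
    let M : ℝ := (1 / Real.sqrt n) *
      ∑ p ∈ Finset.univ.filter (fun p : Fin n × Fin n => p.1 ≠ p.2),
        (if π p.1 = p.2 then (1 : ℝ) else 0) * C p.1 p.2
    let R : ℝ := ∑ i : Fin n, ((if π i = i then (1 : ℝ) else 0) - 1 / (n : ℝ)) * C i i
    let T : ℝ := (1 / (n : ℝ)) *
      ∑ p ∈ Finset.univ.filter (fun p : Fin n × Fin n => p.1 ≠ p.2), C p.1 p.2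
    Real.sqrt n * Uperm
      = ((n : ℝ) / ((n : ℝ) - 1)) * (M + R / Real.sqrt n - T / Real.sqrt n) := by
  intro a b m C hφ Uperm M R T
  have hn2 : (2:ℝ) ≤ (n:ℝ) := by exact_mod_cast hn
  have hnpos : (0:ℝ) < (n:ℝ) := by linarith
  have hs : Real.sqrt n * Real.sqrt n = (n:ℝ) := Real.mul_self_sqrt (le_of_lt hnpos)
  have hs0 : Real.sqrt n ≠ 0 := (Real.sqrt_pos.mpr hnpos).ne'
  have hn1 : (n:ℝ) - 1 ≠ 0 := by linarith
  have hn0 : (n:ℝ) ≠ 0 := hnpos.ne'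
  have perm_sum : ∀ G : Fin n → ℝ, ∑ i, G (π i) = ∑ i, G i := fun G => Equiv.sum_comp π G
  -- U-statistic sum
  have hU : (∑ p ∈ Finset.univ.filter (fun p : Fin n × Fin n => p.1 ≠ p.2),
        hφ ((x p.1).1, (x (π p.1)).2) ((x p.2).1, (x (π p.2)).2))
      = (n:ℝ) * (∑ i, φ (x i).1 (x (π i)).2) - ∑ i, ∑ j, φ (x i).1 (x j).2 := by
    rw [sum_offdiag]
    have hdiag : ∀ i : Fin n,
        hφ ((x i).1, (x (π i)).2) ((x i).1, (x (π i)).2) = 0 := by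
      intro i; simp only [hφ]; ring
    rw [Finset.sum_congr rfl fun i _ => hdiag i, Finset.sum_const_zero, sub_zero]
    have hexp : ∀ i j : Fin n, hφ ((x i).1, (x (π i)).2) ((x j).1, (x (π j)).2)
        = (φ (x i).1 (x (π i)).2 + φ (x j).1 (x (π j)).2
            - φ (x i).1 (x (π j)).2 - φ (x j).1 (x (π i)).2) / 2 := fun i j => rfl
    rw [Finset.sum_congr rfl fun i _ => Finset.sum_congr rfl fun j _ => hexp i j]
    simp only [← Finset.sum_div]
    have e1 : ∑ i : Fin n, ∑ j : Fin n, φ (x i).1 (x (π j)).2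
        = ∑ i : Fin n, ∑ j : Fin n, φ (x i).1 (x j).2 :=
      Finset.sum_congr rfl fun i _ => perm_sum (fun j => φ (x i).1 (x j).2)
    have e2 : ∑ i : Fin n, ∑ j : Fin n, φ (x j).1 (x (π i)).2
        = ∑ i : Fin n, ∑ j : Fin n, φ (x i).1 (x j).2 := by
      rw [perm_sum (fun i => ∑ j, φ (x j).1 (x i).2), Finset.sum_comm]
    simp only [Finset.sum_sub_distrib, Finset.sum_add_distrib,
      Finset.sum_const, Finset.card_univ, Fintype.card_fin, nsmul_eq_mul]
    rw [e1, e2, ← Finset.mul_sum]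
    ring
  -- M's sum
  have hM : (∑ p ∈ Finset.univ.filter (fun p : Fin n × Fin n => p.1 ≠ p.2),
        (if π p.1 = p.2 then (1 : ℝ) else 0) * C p.1 p.2)
      = (∑ i, C i (π i)) - ∑ i, (if π i = i then (1:ℝ) else 0) * C i i := by
    rw [sum_offdiag]
    congr 1
    refine Finset.sum_congr rfl fun i _ => ?_
    rw [Finset.sum_congr rfl fun j (_ : j ∈ Finset.univ) =>
      (ite_mul (π i = j) ((1:ℝ)) 0 (C i j)).trans (by rw [one_mul, zero_mul]),
      Finset.sum_ite_eq]
    simp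
  -- R's sum split
  have hR : (∑ i : Fin n, ((if π i = i then (1 : ℝ) else 0) - 1 / (n : ℝ)) * C i i)
      = (∑ i, (if π i = i then (1:ℝ) else 0) * C i i) - (1/(n:ℝ)) * ∑ i, C i i := by
    rw [Finset.sum_congr rfl fun i (_ : i ∈ Finset.univ) =>
      sub_mul ((if π i = i then (1:ℝ) else 0)) (1/(n:ℝ)) (C i i),
      Finset.sum_sub_distrib, ← Finset.mul_sum]
  -- centered diagonal/permuted sums
  have hCA : ∑ i, C i (π i)
      = (∑ i, φ (x i).1 (x (π i)).2) - (∑ i, a (x i).1) - (∑ i, b (x i).2) + (n:ℝ) * m := by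
    simp only [C]
    rw [Finset.sum_add_distrib, Finset.sum_sub_distrib, Finset.sum_sub_distrib,
      Finset.sum_const, perm_sum (fun i => b (x i).2)]
    simp [mul_comm]
  have hCS : ∑ i, ∑ j, C i j
      = (∑ i, ∑ j, φ (x i).1 (x j).2) - (n:ℝ) * (∑ i, a (x i).1)
        - (n:ℝ) * (∑ i, b (x i).2) + (n:ℝ) * (n:ℝ) * m := by
    simp only [C]
    simp only [Finset.sum_add_distrib, Finset.sum_sub_distrib, Finset.sum_const,
      Finset.card_univ, Fintype.card_fin, nsmul_eq_mul]
    rw [← Finset.mul_sum]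
    ring
  have hT : (∑ p ∈ Finset.univ.filter (fun p : Fin n × Fin n => p.1 ≠ p.2), C p.1 p.2)
      = (∑ i, ∑ j, C i j) - ∑ i, C i i := sum_offdiag (fun p => C p.1 p.2)
  simp only [Uperm, M, R, T, hU, hM, hR, hT, hCA, hCS]
  generalize (∑ i, φ (x i).1 (x (π i)).2) = A
  generalize (∑ i : Fin n, ∑ j : Fin n, φ (x i).1 (x j).2) = S
  generalize (∑ i, a (x i).1) = Sa
  generalize (∑ i, b (x i).2) = Sb
  generalize (∑ i, (if π i = i then (1:ℝ) else 0) * C i i) = I1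
  generalize (∑ i, C i i) = D
  set s := Real.sqrt ((n:ℕ):ℝ) with hsdef
  rw [← hs] at hn1 hn0 ⊢
  field_simp
  ring
end

section
/- With the notation of the permutation decomposition (Π_n uniform on S_n independent of the i.i.d. sample, C_{i,i} as defined, R_n^{Π_n} = Σ_{i=1}^n (1{Π_n(i)=i} − 1/n) C_{i,i}), assume E_P[φ²] < ∞ and E_{P¹⊗P²}[φ²] < ∞. Then there is an absolute constant C > 0 with E[(R_n^{Π_n})²] ≤ C (E_P[φ²] + E_{P¹⊗P²}[φ²]) for all n ≥ 2. Key ingredients: for a uniformly random permutation Π_n, P(Π_n(i)=i) = 1/n and, for i ≠ j, P(Π_n(i)=i, Π_n(j)=j) = 1/(n(n−1)), so that E[(1{Π_n(i)=i}−1/n)(1{Π_n(j)=j}−1/n)] = 1/n − 1/n² for i = j and 1/(n(n−1)) − 1/n² for i ≠ j. -/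
open MeasureTheory Finset


lemma card_fix_one (n : ℕ) (i : Fin n) :
    (Finset.univ.filter (fun π : Equiv.Perm (Fin n) => π i = i)).card = (n-1).factorial := by
  rw [← Fintype.card_subtype]
  have e : {π : Equiv.Perm (Fin n) // π i = i} ≃ Equiv.Perm {a : Fin n // a ≠ i} := by
    refine (Equiv.subtypeEquivRight ?_).trans
      (Equiv.Perm.subtypeEquivSubtypePerm (fun a => a ≠ i)).symm
    intro π
    constructor
    · intro h a ha
      have : a = i := not_not.mp ha
      subst this; exact h
    · intro h
      exact h i (not_not_intro rfl)
  rw [Fintype.card_congr e, Fintype.card_perm]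
  congr 1
  rw [Fintype.card_subtype_compl, Fintype.card_subtype_eq, Fintype.card_fin]

lemma card_fix_pair (n : ℕ) (i j : Fin n) (hij : i ≠ j) :
    (Finset.univ.filter (fun π : Equiv.Perm (Fin n) => π i = i ∧ π j = j)).card
      = (n-2).factorial := by
  rw [← Fintype.card_subtype]
  have e : {π : Equiv.Perm (Fin n) // π i = i ∧ π j = j}
      ≃ Equiv.Perm {a : Fin n // ¬(a = i ∨ a = j)} := by
    refine (Equiv.subtypeEquivRight ?_).trans
      (Equiv.Perm.subtypeEquivSubtypePerm (fun a => ¬(a = i ∨ a = j))).symm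
    intro π
    constructor
    · intro h a ha
      rcases not_not.mp ha with rfl | rfl
      · exact h.1
      · exact h.2
    · intro h
      exact ⟨h i (not_not_intro (Or.inl rfl)), h j (not_not_intro (Or.inr rfl))⟩
  rw [Fintype.card_congr e, Fintype.card_perm]
  congr 1
  rw [Fintype.card_subtype_compl, Fintype.card_fin]
  congr 1
  rw [Fintype.card_subtype]
  have : (Finset.univ.filter (fun a : Fin n => a = i ∨ a = j)) = {i, j} := by
    ext a; simp [Finset.mem_insert]
  rw [this, Finset.card_pair hij]


lemma sum_fix_sq (n : ℕ) (hn : 2 ≤ n) :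
    ∑ π : Equiv.Perm (Fin n),
      ((Finset.univ.filter (fun i : Fin n => π i = i)).card + 1)^2 = 5 * n.factorial := by
  have hn0 : 0 < n := by omega
  have hn1 : 0 < n - 1 := by omega
  have hfact : n * (n-1).factorial = n.factorial := Nat.mul_factorial_pred hn0.ne'
  have hfact2 : (n-1) * (n-2).factorial = (n-1).factorial := by
    have := Nat.mul_factorial_pred hn1.ne'
    rwa [show n - 1 - 1 = n - 2 by omega] at this
  have hF : ∀ π : Equiv.Perm (Fin n),
      (Finset.univ.filter (fun i : Fin n => π i = i)).card
        = ∑ i : Fin n, (if π i = i then 1 else 0) := by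
    intro π
    rw [Finset.sum_boole]; exact (Nat.cast_id _).symm
  have hsumF : ∑ π : Equiv.Perm (Fin n),
      (Finset.univ.filter (fun i : Fin n => π i = i)).card = n.factorial := by
    simp_rw [hF]
    rw [Finset.sum_comm]
    have : ∀ i : Fin n, ∑ π : Equiv.Perm (Fin n), (if π i = i then 1 else 0)
        = (n-1).factorial := by
      intro i
      rw [Finset.sum_boole, Nat.cast_id, card_fix_one]
    simp_rw [this, Finset.sum_const, Finset.card_univ, Fintype.card_fin, smul_eq_mul, hfact]
  have hsumF2 : ∑ π : Equiv.Perm (Fin n),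
      ((Finset.univ.filter (fun i : Fin n => π i = i)).card)^2 = 2 * n.factorial := by
    have expand : ∀ π : Equiv.Perm (Fin n),
        ((Finset.univ.filter (fun i : Fin n => π i = i)).card)^2
          = ∑ i : Fin n, ∑ j : Fin n, (if π i = i ∧ π j = j then 1 else 0) := by
      intro π
      rw [hF, sq, Finset.sum_mul_sum]
      refine Finset.sum_congr rfl fun i _ => Finset.sum_congr rfl fun j _ => ?_
      by_cases h1 : π i = i <;> by_cases h2 : π j = j <;> simp [h1, h2]
    simp_rw [expand]
    rw [Finset.sum_comm]
    have inner : ∀ i : Fin n, ∑ π : Equiv.Perm (Fin n),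
        ∑ j : Fin n, (if π i = i ∧ π j = j then 1 else 0)
        = (n-1).factorial + (n-1) * (n-2).factorial := by
      intro i
      rw [Finset.sum_comm]
      have hterm : ∀ j : Fin n, ∑ π : Equiv.Perm (Fin n), (if π i = i ∧ π j = j then 1 else 0)
          = (Finset.univ.filter (fun π : Equiv.Perm (Fin n) => π i = i ∧ π j = j)).card := by
        intro j; rw [Finset.sum_boole, Nat.cast_id]
      simp_rw [hterm]
      rw [← Finset.add_sum_erase _ _ (Finset.mem_univ i)]
      have h1 : (Finset.univ.filter (fun π : Equiv.Perm (Fin n) => π i = i ∧ π i = i)).card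
          = (n-1).factorial := by
        simp only [and_self]; exact card_fix_one n i
      rw [h1]
      congr 1
      rw [Finset.sum_congr rfl (fun j hj => card_fix_pair n i j
        (fun h => (Finset.mem_erase.mp hj).1 h.symm)), Finset.sum_const,
        Finset.card_erase_of_mem (Finset.mem_univ i), Finset.card_univ, Fintype.card_fin,
        smul_eq_mul]
    simp_rw [inner]
    rw [Finset.sum_const, Finset.card_univ, Fintype.card_fin, smul_eq_mul, hfact2,
      Nat.mul_add, hfact, two_mul]
  have : ∀ π : Equiv.Perm (Fin n),
      ((Finset.univ.filter (fun i : Fin n => π i = i)).card + 1)^2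
        = ((Finset.univ.filter (fun i : Fin n => π i = i)).card)^2
          + 2 * (Finset.univ.filter (fun i : Fin n => π i = i)).card + 1 := by
    intro π; ring
  simp_rw [this]
  rw [Finset.sum_add_distrib, Finset.sum_add_distrib, hsumF2, ← Finset.mul_sum, hsumF,
    Finset.sum_const, Finset.card_univ, Fintype.card_perm, Fintype.card_fin, smul_eq_mul,
    mul_one]
  ring


lemma map_eval_pi {E : Type} [MeasurableSpace E] (P : Measure E) [IsProbabilityMeasure P]
    {n : ℕ} (i : Fin n) :
    (Measure.pi (fun _ : Fin n => P)).map (fun x => x i) = P := by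
  ext s hs
  rw [Measure.map_apply (measurable_pi_apply i) hs]
  have : (fun x : Fin n → E => x i) ⁻¹' s
      = Set.pi Set.univ (Function.update (fun _ => Set.univ) i s) := Set.eval_preimage
  rw [this, Measure.pi_pi]
  rw [Finset.prod_eq_single i]
  · rw [Function.update_self]
  · intro j _ hj
    rw [Function.update_of_ne hj, measure_univ]
  · intro h; exact absurd (Finset.mem_univ i) h

lemma sq_integral_le {α : Type*} [MeasurableSpace α] (μ : Measure α) [IsProbabilityMeasure μ]
    {f : α → ℝ} (hm : AEStronglyMeasurable f μ) (hi : Integrable (fun x => f x ^ 2) μ) :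
    (∫ x, f x ∂μ)^2 ≤ ∫ x, f x ^ 2 ∂μ := by
  have hmem : MemLp f 2 μ := (memLp_two_iff_integrable_sq hm).2 hi
  have hv := ProbabilityTheory.variance_eq_sub hmem
  have hnn := ProbabilityTheory.variance_nonneg f μ
  simp only [Pi.pow_apply] at hv
  rw [hv] at hnn
  linarith

lemma cs_aux {n : ℕ} (c d : Fin n → ℝ) :
    (∑ i, c i * d i)^2 ≤ (∑ i, |c i|) * ∑ i, |c i| * d i ^ 2 := by
  calc (∑ i, c i * d i)^2 ≤ (∑ i, |c i * d i|)^2 := by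
        rw [← sq_abs]
        exact pow_le_pow_left₀ (abs_nonneg _) (Finset.abs_sum_le_sum_abs _ _) 2
    _ ≤ _ := Finset.sum_sq_le_sum_mul_sum_of_sq_eq_mul _
        (fun i _ => abs_nonneg _)
        (fun i _ => mul_nonneg (abs_nonneg _) (sq_nonneg _))
        (fun i _ => by rw [abs_mul, mul_pow, sq_abs (d i)]; ring)


theorem aux_main {E : Type} [MeasurableSpace E] (P : Measure (E × E))
    (hP : IsProbabilityMeasure P)
    (φ : E → E → ℝ) (hφ : Measurable (fun p : E × E => φ p.1 p.2))
    (hA : Integrable (fun p : E × E => (φ p.1 p.2) ^ 2) P)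
    (hB : Integrable (fun p : E × E => (φ p.1 p.2) ^ 2) (P.fst.prod P.snd))
    (n : ℕ) (hn : 2 ≤ n) :
    ((Nat.factorial n : ℝ))⁻¹ *
        ∑ π : Equiv.Perm (Fin n),
          ∫ x : Fin n → E × E,
            (∑ i : Fin n, ((if π i = i then (1:ℝ) else 0) - 1/(n:ℝ)) *
              (φ (x i).1 (x i).2 - (∫ v, φ (x i).1 v ∂P.snd)
                - (∫ u, φ u (x i).2 ∂P.fst)
                + ∫ p, φ p.1 p.2 ∂(P.fst.prod P.snd))) ^ 2 ∂(Measure.pi fun _ => P)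
      ≤ 60 * ((∫ p, (φ p.1 p.2)^2 ∂P) + ∫ p, (φ p.1 p.2)^2 ∂(P.fst.prod P.snd)) := by
  haveI := hP
  set ν₁ := P.fst with hν₁
  set ν₂ := P.snd with hν₂
  set A : ℝ := ∫ p, (φ p.1 p.2)^2 ∂P with hAdef
  set B : ℝ := ∫ p, (φ p.1 p.2)^2 ∂(ν₁.prod ν₂) with hBdef
  have hA0 : 0 ≤ A := integral_nonneg fun p => sq_nonneg _
  have hB0 : 0 ≤ B := integral_nonneg fun p => sq_nonneg _
  set a : E → ℝ := fun u => ∫ v, φ u v ∂ν₂ with hadef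
  set b : E → ℝ := fun v => ∫ u, φ u v ∂ν₁ with hbdef
  set m : ℝ := ∫ p, φ p.1 p.2 ∂(ν₁.prod ν₂) with hmdef
  set g : E × E → ℝ := fun p => φ p.1 p.2 - a p.1 - b p.2 + m with hgdef
  have hφm : StronglyMeasurable (fun p : E × E => φ p.1 p.2) := hφ.stronglyMeasurable
  have ha_m : StronglyMeasurable a := hφm.integral_prod_right'
  have hb_m : StronglyMeasurable b := hφm.integral_prod_left'
  have hg_m : StronglyMeasurable g :=
    ((hφm.sub (ha_m.comp_measurable measurable_fst)).sub
      (hb_m.comp_measurable measurable_snd)).add stronglyMeasurable_const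
  have hg2_m : StronglyMeasurable (fun p => g p ^ 2) := by
    simp only [pow_two]; exact hg_m.mul hg_m
  have hφ2m : StronglyMeasurable (fun p : E × E => (φ p.1 p.2)^2) := by
    simp only [pow_two]; exact hφm.mul hφm
  -- a² bound on ν₁
  have ha2_int : Integrable (fun u => a u ^ 2) ν₁ := by
    refine Integrable.mono' (hB.integral_prod_left) ?_ ?_
    · exact (by simp only [pow_two]; exact ha_m.mul ha_m : StronglyMeasurable
        (fun u => a u ^ 2)).aestronglyMeasurable
    · filter_upwards [hB.prod_right_ae] with u hu
      rw [Real.norm_eq_abs, abs_of_nonneg (sq_nonneg _)]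
      exact sq_integral_le ν₂
        ((hφ.comp measurable_prodMk_left).aestronglyMeasurable) hu
  have ha2_le : ∫ u, a u ^ 2 ∂ν₁ ≤ B := by
    refine le_trans (integral_mono_of_nonneg (Filter.Eventually.of_forall fun u => sq_nonneg _)
      (hB.integral_prod_left) ?_) ?_
    · filter_upwards [hB.prod_right_ae] with u hu
      exact sq_integral_le ν₂ ((hφ.comp measurable_prodMk_left).aestronglyMeasurable) hu
    · rw [hBdef, integral_prod _ hB]
  -- b² bound on ν₂
  have hb2_int : Integrable (fun v => b v ^ 2) ν₂ := by
    refine Integrable.mono' (hB.integral_prod_right) ?_ ?_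
    · exact (by simp only [pow_two]; exact hb_m.mul hb_m : StronglyMeasurable
        (fun v => b v ^ 2)).aestronglyMeasurable
    · filter_upwards [hB.prod_left_ae] with v hv
      rw [Real.norm_eq_abs, abs_of_nonneg (sq_nonneg _)]
      exact sq_integral_le ν₁
        ((hφ.comp (measurable_prodMk_right : Measurable fun u : E => (u, v))).aestronglyMeasurable) hv
  have hb2_le : ∫ v, b v ^ 2 ∂ν₂ ≤ B := by
    refine le_trans (integral_mono_of_nonneg (Filter.Eventually.of_forall fun v => sq_nonneg _)
      (hB.integral_prod_right) ?_) ?_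
    · filter_upwards [hB.prod_left_ae] with v hv
      exact sq_integral_le ν₁
        ((hφ.comp (measurable_prodMk_right : Measurable fun u : E => (u, v))).aestronglyMeasurable) hv
    · rw [hBdef, integral_prod_symm _ hB]
  have hm2 : m ^ 2 ≤ B := sq_integral_le (ν₁.prod ν₂) hφm.aestronglyMeasurable hB
  -- transfer to P
  have hfst_eq : ∫ p : E × E, a p.1 ^ 2 ∂P = ∫ u, a u ^ 2 ∂ν₁ := by
    rw [hν₁, show P.fst = P.map Prod.fst from rfl, integral_map measurable_fst.aemeasurable]
    exact (by simp only [pow_two]; exact ha_m.mul ha_m : StronglyMeasurable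
        (fun u => a u ^ 2)).aestronglyMeasurable
  have hsnd_eq : ∫ p : E × E, b p.2 ^ 2 ∂P = ∫ v, b v ^ 2 ∂ν₂ := by
    rw [hν₂, show P.snd = P.map Prod.snd from rfl, integral_map measurable_snd.aemeasurable]
    exact (by simp only [pow_two]; exact hb_m.mul hb_m : StronglyMeasurable
        (fun v => b v ^ 2)).aestronglyMeasurable
  have ha2P_int : Integrable (fun p : E × E => a p.1 ^ 2) P := by
    have := (integrable_map_measure
      ((by simp only [pow_two]; exact ha_m.mul ha_m : StronglyMeasurable
        (fun u => a u ^ 2)).aestronglyMeasurable)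
      measurable_fst.aemeasurable).mp (by rw [show P.map Prod.fst = P.fst from rfl]; exact ha2_int)
    exact this
  have hb2P_int : Integrable (fun p : E × E => b p.2 ^ 2) P := by
    have := (integrable_map_measure
      ((by simp only [pow_two]; exact hb_m.mul hb_m : StronglyMeasurable
        (fun v => b v ^ 2)).aestronglyMeasurable)
      measurable_snd.aemeasurable).mp (by rw [show P.map Prod.snd = P.snd from rfl]; exact hb2_int)
    exact this
  -- pointwise bound for g²
  have hptw : ∀ p : E × E, g p ^ 2
      ≤ 4 * ((φ p.1 p.2)^2 + a p.1 ^ 2 + b p.2 ^ 2 + m ^ 2) := by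
    intro p
    have h1 := sq_nonneg (φ p.1 p.2 + a p.1)
    have h2 := sq_nonneg (φ p.1 p.2 + b p.2)
    have h3 := sq_nonneg (φ p.1 p.2 - m)
    have h4 := sq_nonneg (a p.1 - b p.2)
    have h5 := sq_nonneg (a p.1 + m)
    have h6 := sq_nonneg (b p.2 + m)
    simp only [hgdef]
    nlinarith
  have hbound_int : Integrable
      (fun p : E × E => 4 * ((φ p.1 p.2)^2 + a p.1 ^ 2 + b p.2 ^ 2 + m ^ 2)) P :=
    (((hA.add ha2P_int).add hb2P_int).add (integrable_const _)).const_mul 4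
  have hg2_int : Integrable (fun p => g p ^ 2) P := by
    refine Integrable.mono' hbound_int hg2_m.aestronglyMeasurable ?_
    exact Filter.Eventually.of_forall fun p => by
      rw [Real.norm_eq_abs, abs_of_nonneg (sq_nonneg _)]; exact hptw p
  set G : ℝ := ∫ p, g p ^ 2 ∂P with hGdef
  have hG0 : 0 ≤ G := integral_nonneg fun p => sq_nonneg _
  have hG_le : G ≤ 12 * (A + B) := by
    have step : G ≤ ∫ p : E × E,
        4 * ((φ p.1 p.2)^2 + a p.1 ^ 2 + b p.2 ^ 2 + m ^ 2) ∂P :=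
      integral_mono hg2_int hbound_int hptw
    have i2 : Integrable (fun p : E × E => (φ p.1 p.2)^2 + a p.1 ^ 2) P := hA.add ha2P_int
    have i3 : Integrable (fun p : E × E => (φ p.1 p.2)^2 + a p.1 ^ 2 + b p.2 ^ 2) P :=
      i2.add hb2P_int
    have e1 : ∫ p : E × E, ((φ p.1 p.2)^2 + a p.1 ^ 2 + b p.2 ^ 2 + m ^ 2) ∂P
        = (∫ p : E × E, ((φ p.1 p.2)^2 + a p.1 ^ 2 + b p.2 ^ 2) ∂P)
          + ∫ _p : E × E, m ^ 2 ∂P := integral_add i3 (integrable_const _)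
    have e2 : ∫ p : E × E, ((φ p.1 p.2)^2 + a p.1 ^ 2 + b p.2 ^ 2) ∂P
        = (∫ p : E × E, ((φ p.1 p.2)^2 + a p.1 ^ 2) ∂P)
          + ∫ p : E × E, b p.2 ^ 2 ∂P := integral_add i2 hb2P_int
    have e3 : ∫ p : E × E, ((φ p.1 p.2)^2 + a p.1 ^ 2) ∂P
        = (∫ p : E × E, (φ p.1 p.2)^2 ∂P)
          + ∫ p : E × E, a p.1 ^ 2 ∂P := integral_add hA ha2P_int
    have e4 : ∫ _p : E × E, m ^ 2 ∂P = m ^ 2 := by simp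
    have expand : ∫ p : E × E,
        4 * ((φ p.1 p.2)^2 + a p.1 ^ 2 + b p.2 ^ 2 + m ^ 2) ∂P
        = 4 * (A + (∫ p : E × E, a p.1 ^ 2 ∂P) + (∫ p : E × E, b p.2 ^ 2 ∂P) + m ^ 2) := by
      rw [integral_const_mul, e1, e2, e3, e4, hAdef]
    rw [expand, hfst_eq, hsnd_eq] at step
    linarith
  -- transfer g² to the product space
  set μp : Measure (Fin n → E × E) := Measure.pi (fun _ => P) with hμp
  have heval : ∀ i : Fin n, (μp.map (fun x => x i)) = P := fun i => map_eval_pi P i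
  have hco_int : ∀ i : Fin n, Integrable (fun x : Fin n → E × E => g (x i) ^ 2) μp := by
    intro i
    have h := (integrable_map_measure
      (by rw [heval i]; exact hg2_m.aestronglyMeasurable)
      (measurable_pi_apply i).aemeasurable).mp (by rw [heval i]; exact hg2_int)
    exact h
  have hco_eq : ∀ i : Fin n, ∫ x : Fin n → E × E, g (x i) ^ 2 ∂μp = G := by
    intro i
    rw [hGdef, ← heval i, integral_map (measurable_pi_apply i).aemeasurable
      (by rw [heval i]; exact hg2_m.aestronglyMeasurable)]
  set F : Equiv.Perm (Fin n) → ℕ := fun π => (Finset.univ.filter fun i => π i = i).card with hF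
  have hn0 : (0:ℝ) < (n:ℝ) := by positivity
  -- rewrite integrand
  have hR : ∀ (π : Equiv.Perm (Fin n)) (x : Fin n → E × E),
      (∑ i : Fin n, ((if π i = i then (1:ℝ) else 0) - 1/(n:ℝ)) *
        (φ (x i).1 (x i).2 - (∫ v, φ (x i).1 v ∂ν₂)
          - (∫ u, φ u (x i).2 ∂ν₁) + m))
      = ∑ i : Fin n, ((if π i = i then (1:ℝ) else 0) - 1/(n:ℝ)) * g (x i) :=
    fun π x => rfl
  simp only [hR]
  -- key bound per permutation
  have key : ∀ π : Equiv.Perm (Fin n),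
      ∫ x : Fin n → E × E,
        (∑ i : Fin n, ((if π i = i then (1:ℝ) else 0) - 1/(n:ℝ)) * g (x i))^2 ∂μp
        ≤ ((F π : ℝ) + 1)^2 * G := by
    intro π
    set c : Fin n → ℝ := fun i => (if π i = i then (1:ℝ) else 0) - 1/(n:ℝ) with hc
    have hw_nonneg : 0 ≤ ∑ i, |c i| := Finset.sum_nonneg fun i _ => abs_nonneg _
    have hw_le : ∑ i, |c i| ≤ (F π : ℝ) + 1 := by
      have hci : ∀ i, |c i| ≤ (if π i = i then (1:ℝ) else 0) + 1/(n:ℝ) := by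
        intro i
        rw [hc]
        refine (abs_sub _ _).trans ?_
        have h1 : |(if π i = i then (1:ℝ) else 0)| = if π i = i then (1:ℝ) else 0 := by
          split_ifs <;> simp
        have h2 : |1/(n:ℝ)| = 1/(n:ℝ) := abs_of_nonneg (by positivity)
        rw [h1, h2]
      calc ∑ i, |c i| ≤ ∑ i : Fin n, ((if π i = i then (1:ℝ) else 0) + 1/(n:ℝ)) :=
            Finset.sum_le_sum (fun i _ => hci i)
        _ = (F π : ℝ) + 1 := by
            rw [Finset.sum_add_distrib, Finset.sum_boole, Finset.sum_const, Finset.card_univ,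
              Fintype.card_fin, nsmul_eq_mul, mul_one_div, div_self (ne_of_gt hn0)]
    have hpw : ∀ x : Fin n → E × E,
        (∑ i, c i * g (x i))^2 ≤ (∑ i, |c i|) * ∑ i, |c i| * g (x i)^2 :=
      fun x => cs_aux c (fun i => g (x i))
    have hint : Integrable (fun x : Fin n → E × E =>
        (∑ i, |c i|) * ∑ i, |c i| * g (x i)^2) μp :=
      (integrable_finset_sum Finset.univ (fun i _ => (hco_int i).const_mul _)).const_mul _
    have h1 : ∫ x : Fin n → E × E, (∑ i, c i * g (x i))^2 ∂μp
        ≤ ∫ x : Fin n → E × E, (∑ i, |c i|) * ∑ i, |c i| * g (x i)^2 ∂μp :=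
      integral_mono_of_nonneg (Filter.Eventually.of_forall fun x => sq_nonneg _) hint
        (Filter.Eventually.of_forall hpw)
    have h2 : ∫ x : Fin n → E × E, (∑ i, |c i|) * ∑ i, |c i| * g (x i)^2 ∂μp
        = (∑ i, |c i|) * ((∑ i, |c i|) * G) := by
      rw [integral_const_mul, integral_finset_sum Finset.univ
        (fun i _ => (hco_int i).const_mul _)]
      congr 1
      calc ∑ i : Fin n, ∫ x : Fin n → E × E, |c i| * g (x i)^2 ∂μp
          = ∑ i : Fin n, |c i| * G :=
            Finset.sum_congr rfl fun i _ => by rw [integral_const_mul, hco_eq i]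
        _ = (∑ i : Fin n, |c i|) * G := by rw [Finset.sum_mul]
    refine h1.trans (h2.le.trans ?_)
    have : (∑ i, |c i|) * ((∑ i, |c i|) * G) ≤ ((F π : ℝ) + 1) * (((F π : ℝ) + 1) * G) := by
      have hF1 : (0:ℝ) ≤ (F π : ℝ) + 1 := by positivity
      exact mul_le_mul hw_le (mul_le_mul hw_le le_rfl hG0 hF1) (by positivity) hF1
    refine this.trans (le_of_eq (by ring))
  -- assemble
  have hsum : ∑ π : Equiv.Perm (Fin n),
      ∫ x : Fin n → E × E,
        (∑ i : Fin n, ((if π i = i then (1:ℝ) else 0) - 1/(n:ℝ)) * g (x i))^2 ∂μp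
      ≤ 5 * (n.factorial : ℝ) * G := by
    calc ∑ π : Equiv.Perm (Fin n), ∫ x : Fin n → E × E,
          (∑ i : Fin n, ((if π i = i then (1:ℝ) else 0) - 1/(n:ℝ)) * g (x i))^2 ∂μp
        ≤ ∑ π : Equiv.Perm (Fin n), ((F π : ℝ) + 1)^2 * G :=
          Finset.sum_le_sum fun π _ => key π
      _ = (∑ π : Equiv.Perm (Fin n), ((F π : ℝ) + 1)^2) * G := by rw [← Finset.sum_mul]
      _ = 5 * (n.factorial : ℝ) * G := by
          have := sum_fix_sq n hn
          have hcast : (∑ π : Equiv.Perm (Fin n), ((F π : ℝ) + 1)^2)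
              = ((∑ π : Equiv.Perm (Fin n), (F π + 1)^2 : ℕ) : ℝ) := by
            push_cast; rfl
          rw [hcast, hF]
          rw [this]
          push_cast; ring
  have hfac_pos : (0:ℝ) < (n.factorial : ℝ) := by
    exact_mod_cast Nat.factorial_pos n
  have hmul : (↑n.factorial : ℝ)⁻¹ * (5 * (n.factorial : ℝ) * G) = 5 * G := by
    field_simp
  calc (↑n.factorial : ℝ)⁻¹ * ∑ π : Equiv.Perm (Fin n),
        ∫ x : Fin n → E × E,
          (∑ i : Fin n, ((if π i = i then (1:ℝ) else 0) - 1/(n:ℝ)) * g (x i))^2 ∂μp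
      ≤ (↑n.factorial : ℝ)⁻¹ * (5 * (n.factorial : ℝ) * G) :=
        mul_le_mul_of_nonneg_left hsum (inv_nonneg.mpr hfac_pos.le)
    _ = 5 * G := hmul
    _ ≤ 60 * (A + B) := by linarith

/-- There is an absolute constant `C > 0` such that `E[(R_n^{Π_n})²] ≤ C(E_P[φ²] +
E_{P¹⊗P²}[φ²])` for all `n ≥ 2` (expectation over the uniform permutation and the i.i.d.
sample); moreover the key uniform-permutation facts hold: `P(Π_n(i)=i) = 1/n` and, for
`i ≠ j`, `P(Π_n(i)=i, Π_n(j)=j) = 1/(n(n−1))`. -/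
theorem stmt_16 :
    (∃ C : ℝ, 0 < C ∧
      ∀ (E : Type) [MeasurableSpace E] (P : Measure (E × E)),
        IsProbabilityMeasure P →
        ∀ φ : E → E → ℝ, Measurable (fun p : E × E => φ p.1 p.2) →
        Integrable (fun p : E × E => (φ p.1 p.2) ^ 2) P →
        Integrable (fun p : E × E => (φ p.1 p.2) ^ 2) (P.fst.prod P.snd) →
        ∀ n : ℕ, 2 ≤ n →
          (let a : E → ℝ := fun u => ∫ v, φ u v ∂P.snd
           let b : E → ℝ := fun v => ∫ u, φ u v ∂P.fst
           let m : ℝ := ∫ p, φ p.1 p.2 ∂(P.fst.prod P.snd)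
           let R : (Fin n → E × E) → Equiv.Perm (Fin n) → ℝ := fun x π =>
             ∑ i : Fin n, ((if π i = i then (1 : ℝ) else 0) - 1 / (n : ℝ)) *
               (φ (x i).1 (x i).2 - a (x i).1 - b (x i).2 + m)
           ((Nat.factorial n : ℝ))⁻¹ *
               ∑ π : Equiv.Perm (Fin n),
                 ∫ x : Fin n → E × E, (R x π) ^ 2 ∂(Measure.pi fun _ => P)
             ≤ C * ((∫ p, (φ p.1 p.2) ^ 2 ∂P)
                 + ∫ p, (φ p.1 p.2) ^ 2 ∂(P.fst.prod P.snd)))) ∧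
    (∀ (n : ℕ) (i : Fin n),
      ((Nat.factorial n : ℝ))⁻¹ *
          ((Finset.univ.filter (fun π : Equiv.Perm (Fin n) => π i = i)).card : ℝ)
        = 1 / (n : ℝ)) ∧
    (∀ (n : ℕ) (i j : Fin n), i ≠ j →
      ((Nat.factorial n : ℝ))⁻¹ *
          ((Finset.univ.filter
            (fun π : Equiv.Perm (Fin n) => π i = i ∧ π j = j)).card : ℝ)
        = 1 / ((n : ℝ) * ((n : ℝ) - 1))) := by
  refine ⟨⟨60, by norm_num, ?_⟩, ?_, ?_⟩
  · intro E instE P hP φ hφ hA hB n hn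
    exact aux_main P hP φ hφ hA hB n hn
  · intro n i
    have hn0 : 0 < n := i.pos
    rw [card_fix_one]
    have e : n * (n-1).factorial = n.factorial := Nat.mul_factorial_pred hn0.ne'
    rw [← e]
    have h1 : ((n-1).factorial : ℝ) ≠ 0 := by
      exact_mod_cast (Nat.factorial_pos _).ne'
    have h2 : (n : ℝ) ≠ 0 := by positivity
    push_cast
    field_simp
  · intro n i j hij
    have hn2 : 2 ≤ n := by
      rcases Nat.lt_or_ge n 2 with h | h
      · exfalso
        have h1 := i.isLt
        have h2 := j.isLt
        have : i.val ≠ j.val := fun hv => hij (Fin.ext hv)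
        omega
      · exact h
    have hn0 : 0 < n := by omega
    rw [card_fix_pair n i j hij]
    have e : n.factorial = n * (n-1) * (n-2).factorial := by
      have e2 : (n-1) * (n-2).factorial = (n-1).factorial := by
        have := Nat.mul_factorial_pred (show n - 1 ≠ 0 by omega)
        rwa [show n - 1 - 1 = n - 2 by omega] at this
      rw [Nat.mul_assoc, e2, Nat.mul_factorial_pred hn0.ne']
    have h1 : ((n-2).factorial : ℝ) ≠ 0 := by
      exact_mod_cast (Nat.factorial_pos _).ne'
    have h2 : (n : ℝ) ≠ 0 := by positivity
    have h3 : (n : ℝ) - 1 ≠ 0 := by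
      have : (2:ℝ) ≤ (n:ℝ) := by exact_mod_cast hn2
      intro h
      have : (1:ℝ) + 1 ≤ (n:ℝ) := by exact_mod_cast hn2
      nlinarith
    have hcast : (n.factorial : ℝ) = (n:ℝ) * ((n:ℝ) - 1) * ((n-2).factorial : ℝ) := by
      rw [e]
      push_cast [Nat.cast_sub (show 1 ≤ n by omega)]
      ring
    rw [hcast]
    field_simp
end
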